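/- Let φ : Γ → ℂ be a function with φ(e) = 1, and suppose π is a unitary representation of G = Γ≀𝔖∞ on a complex Hilbert space H with a cyclic unit vector ξ such that ⟨π(sγ)ξ, ξ⟩ = φ_reg(sγ) for all s ∈ 𝔖∞, γ ∈ Γ^∞_e. Let s_n ∈ 𝔖∞ be the transposition interchanging n and n+1. Then (π(s_n))_{n∈ℕ} is a nontrivial central sequence in π(G)″: (1) for every m ∈ π(G)″ and every x ∈ H, ‖(m·π(s_n) − π(s_n)·m)x‖ → 0 as n → ∞ (each π(s_n) is a self-adjoint unitary); and (2) there is no sequence (c_n) of complex numbers such that ‖(π(s_n) − c_n·I)x‖ → 0 for every x ∈ H. -/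

import Mathlib

open scoped Classical ComplexOrder
open Filter Topology

noncomputable section

namespace DN

local notation "⟪" x ", " y "⟫" => @inner ℂ _ _ x y

/-- The group `𝔖∞` of finitely supported permutations of `ℕ`. -/
def SInf : Subgroup (Equiv.Perm ℕ) where
  carrier := {s | {i | s i ≠ i}.Finite}
  one_mem' := by simp
  mul_mem' := by
    intro s t hs ht
    refine Set.Finite.subset (hs.union ht) fun i hi => ?_
    simp only [Set.mem_setOf_eq, Set.mem_union, Equiv.Perm.mul_apply] at hi ⊢
    by_contra h
    push_neg at h
    rw [h.2, h.1] at hi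
    exact hi rfl
  inv_mem' := by
    intro s hs
    refine Set.Finite.subset hs fun i hi => ?_
    simp only [Set.mem_setOf_eq] at hi ⊢
    intro h
    exact hi (Equiv.Perm.inv_eq_iff_eq.mpr h.symm)

theorem mem_SInf (s : Equiv.Perm ℕ) : s ∈ SInf ↔ {i | s i ≠ i}.Finite := Iff.rfl

/-- The group `Γ^∞_e` of finitely supported sequences in `Γ`. -/
def GammaE (Γ : Type*) [Group Γ] : Subgroup (ℕ → Γ) where
  carrier := {γ | {i | γ i ≠ 1}.Finite}
  one_mem' := by simp
  mul_mem' := by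
    intro f g hf hg
    refine Set.Finite.subset (hf.union hg) fun i hi => ?_
    simp only [Set.mem_setOf_eq, Set.mem_union, Pi.mul_apply] at hi ⊢
    by_contra h
    push_neg at h
    rw [h.1, h.2] at hi
    exact hi (one_mul 1)
  inv_mem' := by
    intro f hf
    refine Set.Finite.subset hf fun i hi => ?_
    simp only [Set.mem_setOf_eq, Pi.inv_apply, ne_eq, inv_eq_one] at hi ⊢
    exact hi

theorem mem_GammaE {Γ : Type*} [Group Γ] (γ : ℕ → Γ) :
    γ ∈ GammaE Γ ↔ {i | γ i ≠ 1}.Finite := Iff.rfl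

/-- The permutation action of `Equiv.Perm ℕ` on `ℕ → Γ`. -/
def permMulAut (Γ : Type*) [Group Γ] (s : Equiv.Perm ℕ) : MulAut (ℕ → Γ) where
  toFun γ := γ ∘ s.symm
  invFun γ := γ ∘ s
  left_inv γ := by funext i; simp [Function.comp]
  right_inv γ := by funext i; simp [Function.comp]
  map_mul' γ δ := rfl

def permAction (Γ : Type*) [Group Γ] : Equiv.Perm ℕ →* MulAut (ℕ → Γ) where
  toFun := permMulAut Γ
  map_one' := by ext γ i; rfl
  map_mul' s t := by ext γ i; rfl

/-- The (big) wreath product `(ℕ → Γ) ⋊ Perm ℕ`. -/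
abbrev W (Γ : Type*) [Group Γ] := (ℕ → Γ) ⋊[permAction Γ] Equiv.Perm ℕ

/-- The wreath product `G = Γ ≀ 𝔖∞`, as the subgroup of `W Γ` of finitely
supported elements. -/
def WG (Γ : Type*) [Group Γ] : Subgroup (W Γ) where
  carrier := {g | {i | g.right i ≠ i}.Finite ∧ {i | g.left i ≠ 1}.Finite}
  one_mem' := by
    constructor
    · convert Set.finite_empty using 1
      ext i; simp
    · convert Set.finite_empty using 1
      ext i; simp
  mul_mem' := by
    rintro a b ⟨ha1, ha2⟩ ⟨hb1, hb2⟩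
    constructor
    · refine Set.Finite.subset (ha1.union hb1) fun i hi => ?_
      simp only [Set.mem_setOf_eq, Set.mem_union, SemidirectProduct.mul_right,
        Equiv.Perm.mul_apply] at hi ⊢
      by_contra h
      push_neg at h
      rw [h.2, h.1] at hi
      exact hi rfl
    · refine Set.Finite.subset (ha2.union (hb2.image a.right)) fun i hi => ?_
      simp only [Set.mem_setOf_eq, SemidirectProduct.mul_left, Pi.mul_apply] at hi
      by_contra h
      simp only [Set.mem_union, Set.mem_setOf_eq, Set.mem_image, not_or, not_exists,
        not_and, not_not] at h
      obtain ⟨h1, h2⟩ := h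
      apply hi
      have hb : b.left (a.right⁻¹ i) = 1 := by
        by_contra hc
        exact h2 (a.right⁻¹ i) hc (by simp)
      have hrfl : (permAction Γ a.right b.left) i = b.left (a.right⁻¹ i) := rfl
      rw [h1, one_mul, hrfl, hb]
  inv_mem' := by
    rintro a ⟨ha1, ha2⟩
    constructor
    · refine Set.Finite.subset ha1 fun i hi => ?_
      simp only [Set.mem_setOf_eq, SemidirectProduct.inv_right] at hi ⊢
      intro h
      exact hi (Equiv.Perm.inv_eq_iff_eq.mpr h.symm)
    · refine Set.Finite.subset (Set.Finite.preimage (a.right.injective.injOn) ha2)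
        fun i hi => ?_
      simp only [Set.mem_setOf_eq] at hi
      simp only [Set.mem_preimage, Set.mem_setOf_eq]
      intro h
      apply hi
      have hrfl : (a⁻¹).left i = (a.left (a.right i))⁻¹ := rfl
      rw [hrfl, h, inv_one]

theorem mem_WG {Γ : Type*} [Group Γ] (g : W Γ) :
    g ∈ WG Γ ↔ {i | g.right i ≠ i}.Finite ∧ {i | g.left i ≠ 1}.Finite := Iff.rfl

/-- The canonical copy of `𝔖∞` inside `Γ ≀ 𝔖∞`. -/
def permW {Γ : Type*} [Group Γ] (s : SInf) : WG Γ :=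
  ⟨SemidirectProduct.inr s.1, by
    rw [mem_WG]
    constructor
    · have h : (SemidirectProduct.inr s.1 : W Γ).right = s.1 := SemidirectProduct.right_inr _
      rw [h]
      exact s.2
    · convert Set.finite_empty using 1
      ext i; simp⟩

/-- The canonical copy of `Γ^∞_e` inside `Γ ≀ 𝔖∞`. -/
def seqW {Γ : Type*} [Group Γ] (γ : GammaE Γ) : WG Γ :=
  ⟨SemidirectProduct.inl γ.1, by
    rw [mem_WG]
    constructor
    · convert Set.finite_empty using 1
      ext i; simp
    · have h : (SemidirectProduct.inl γ.1 : W Γ).left = γ.1 := SemidirectProduct.left_inl _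
      rw [h]
      exact γ.2⟩

/-- The support of an element of `Γ ≀ 𝔖∞`. -/
def supp {Γ : Type*} [Group Γ] (g : WG Γ) : Set ℕ :=
  {i | (g : W Γ).right i ≠ i ∨ (g : W Γ).left i ≠ 1}

/-- Positive definiteness of a function on a group. -/
def IsPosDef {G : Type*} [Group G] (φ : G → ℂ) : Prop :=
  ∀ (m : ℕ) (g : Fin m → G) (c : Fin m → ℂ),
    0 ≤ ∑ i, ∑ j, c i * (starRingEnd ℂ) (c j) * φ ((g j)⁻¹ * g i)

/-- A state on a group: normalized positive definite function. -/
def IsState {G : Type*} [Group G] (φ : G → ℂ) : Prop := φ 1 = 1 ∧ IsPosDef φ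

/-- `𝔖∞`-centrality of a function on `Γ ≀ 𝔖∞`. -/
def IsSCentral {Γ : Type*} [Group Γ] (φ : WG Γ → ℂ) : Prop :=
  ∀ (s : SInf) (g : WG Γ), φ (permW s * g * (permW s)⁻¹) = φ g

/-- The commutant of a set of bounded operators. -/
def commutant {H : Type*} [NormedAddCommGroup H] [InnerProductSpace ℂ H]
    (S : Set (H →L[ℂ] H)) : Set (H →L[ℂ] H) := {T | ∀ A ∈ S, T * A = A * T}

variable {Γ : Type*} [Group Γ]
variable {H : Type*} [NormedAddCommGroup H] [InnerProductSpace ℂ H] [CompleteSpace H]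

/-- The image set `π(G)` of a representation. -/
def repSet (π : WG Γ →* (H →L[ℂ] H)) : Set (H →L[ℂ] H) := Set.range fun g : WG Γ => π g

/-- The von Neumann algebra `π(G)''` (double commutant). -/
def vN (π : WG Γ →* (H →L[ℂ] H)) : Set (H →L[ℂ] H) := commutant (commutant (repSet π))

/-- The representation is factorial: the center `π(G)' ∩ π(G)''` consists of scalars. -/
def IsFactorial (π : WG Γ →* (H →L[ℂ] H)) : Prop :=
  ∀ T ∈ commutant (repSet π) ∩ vN π, ∃ c : ℂ, T = c • (1 : H →L[ℂ] H)

/-- `(π, H, ξ)` is a GNS triple for `φ`. -/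
structure IsGNS (φ : WG Γ → ℂ) (π : WG Γ →* (H →L[ℂ] H)) (ξ : H) : Prop where
  unitary : ∀ g, π g ∈ unitary (H →L[ℂ] H)
  norm_one : ‖ξ‖ = 1
  cyclic : Dense ((Submodule.span ℂ (Set.range fun g : WG Γ => π g ξ) : Submodule ℂ H) : Set H)
  inner_eq : ∀ g, φ g = ⟪ξ, π g ξ⟫

theorem swap_mem_SInf (a b : ℕ) : Equiv.swap a b ∈ SInf := by
  rw [mem_SInf]
  refine Set.Finite.subset ((Set.finite_singleton a).insert b) fun i hi => ?_
  simp only [Set.mem_setOf_eq] at hi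
  simp only [Set.mem_insert_iff, Set.mem_singleton_iff]
  by_contra h
  push_neg at h
  exact hi (Equiv.swap_apply_of_ne_of_ne h.2 h.1)

/-- The transposition `(a b)` as an element of `Γ ≀ 𝔖∞`. -/
def swapW {Γ : Type*} [Group Γ] (a b : ℕ) : WG Γ := permW ⟨Equiv.swap a b, swap_mem_SInf a b⟩

def omegaFun (n i : ℕ) : ℕ := if i < n then i + n else if i < 2 * n then i - n else i

theorem omegaFun_invol (n i : ℕ) : omegaFun n (omegaFun n i) = i := by
  unfold omegaFun
  split_ifs <;> first | contradiction | omega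

/-- Olshanski's permutation `ω_n`. -/
def omegaPerm (n : ℕ) : Equiv.Perm ℕ :=
  ⟨omegaFun n, omegaFun n, omegaFun_invol n, omegaFun_invol n⟩

theorem omegaPerm_mem (n : ℕ) : omegaPerm n ∈ SInf := by
  rw [mem_SInf]
  refine Set.Finite.subset (Set.finite_Iio (2 * n)) fun i hi => ?_
  simp only [Set.mem_setOf_eq] at hi
  simp only [Set.mem_Iio]
  by_contra h
  push_neg at h
  apply hi
  show omegaFun n i = i
  unfold omegaFun
  split_ifs <;> first | contradiction | omega

/-- `ω_n` as an element of `Γ ≀ 𝔖∞`. -/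
def omegaW {Γ : Type*} [Group Γ] (n : ℕ) : WG Γ := permW ⟨omegaPerm n, omegaPerm_mem n⟩

def sigmaFun (n i : ℕ) : ℕ := if i + 1 < n then i + 1 else if i + 1 = n then 0 else i

def sigmaInvFun (n i : ℕ) : ℕ := if i < n then (if i = 0 then n - 1 else i - 1) else i

theorem sigma_left_inv (n i : ℕ) : sigmaInvFun n (sigmaFun n i) = i := by
  unfold sigmaFun sigmaInvFun
  split_ifs <;> first | contradiction | omega

theorem sigma_right_inv (n i : ℕ) : sigmaFun n (sigmaInvFun n i) = i := by
  unfold sigmaFun sigmaInvFun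
  split_ifs <;> first | contradiction | omega

/-- The cycle `σ_n = (0 1 2 ... n-1)`. -/
def sigmaPerm (n : ℕ) : Equiv.Perm ℕ :=
  ⟨sigmaFun n, sigmaInvFun n, sigma_left_inv n, sigma_right_inv n⟩

theorem sigmaPerm_mem (n : ℕ) : sigmaPerm n ∈ SInf := by
  rw [mem_SInf]
  refine Set.Finite.subset (Set.finite_Iio n) fun i hi => ?_
  simp only [Set.mem_setOf_eq] at hi
  simp only [Set.mem_Iio]
  by_contra h
  push_neg at h
  apply hi
  show sigmaFun n i = i
  unfold sigmaFun
  split_ifs <;> first | contradiction | omega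

/-- The cycle of `s` through the point `i` (the paper's `s_p` for the orbit `p` of `i`). -/
def cycleAt (s : Equiv.Perm ℕ) (i : ℕ) : Equiv.Perm ℕ where
  toFun j := if s.SameCycle i j then s j else j
  invFun j := if s.SameCycle i j then s⁻¹ j else j
  left_inv j := by
    by_cases h : s.SameCycle i j
    · have h2 : s.SameCycle i (s j) := Equiv.Perm.sameCycle_apply_right.mpr h
      simp [h, h2]
    · simp [h]
  right_inv j := by
    by_cases h : s.SameCycle i j
    · have h2 : s.SameCycle i (s⁻¹ j) := Equiv.Perm.sameCycle_symm_apply_right.mpr h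
      simp [h, h2]
    · simp [h]

theorem cycleAt_mem {s : Equiv.Perm ℕ} (hs : s ∈ SInf) (i : ℕ) : cycleAt s i ∈ SInf := by
  rw [mem_SInf] at hs ⊢
  refine Set.Finite.subset hs fun j hj => ?_
  simp only [Set.mem_setOf_eq] at hj ⊢
  intro h
  apply hj
  show (if s.SameCycle i j then s j else j) = j
  split_ifs with hc
  · exact h
  · rfl

/-- The generalized cycle of `g = sγ` corresponding to the orbit of `i` under `s`. -/
def genCycle {Γ : Type*} [Group Γ] (g : WG Γ) (i : ℕ) : WG Γ :=
  permW ⟨cycleAt (g : W Γ).right i, cycleAt_mem g.2.1 i⟩ *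
  seqW ⟨fun k => if ((g : W Γ).right).SameCycle i k then (g : W Γ).left ((g : W Γ).right k)
      else 1, by
    rw [mem_GammaE]
    refine Set.Finite.subset (Set.Finite.preimage ((g : W Γ).right.injective.injOn) g.2.2)
      fun k hk => ?_
    simp only [Set.mem_setOf_eq] at hk
    simp only [Set.mem_preimage, Set.mem_setOf_eq]
    by_cases hsc : ((g : W Γ).right).SameCycle i k
    · rw [if_pos hsc] at hk; exact hk
    · rw [if_neg hsc] at hk; exact absurd rfl hk⟩

/-- The von Neumann algebra `𝔄_j` generated by `O_j` and the `π(γ)` with `γ` supported at `j`. -/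
def Aj (π : WG Γ →* (H →L[ℂ] H)) (O : H →L[ℂ] H) (j : ℕ) : Set (H →L[ℂ] H) :=
  commutant (commutant
    ({O} ∪ {T | ∃ γ : GammaE Γ, (∀ i, i ≠ j → (γ : ℕ → Γ) i = 1) ∧ T = π (seqW γ)}))

section AuxDN

variable {Γ : Type*} [Group Γ]

theorem WG_ext {a b : W Γ} (h1 : a.left = b.left) (h2 : a.right = b.right) : a = b := by
  cases a; cases b; simp_all

theorem permAction_apply (s : Equiv.Perm ℕ) (l : ℕ → Γ) (i : ℕ) :
    permAction Γ s l i = l (s⁻¹ i) := rfl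

theorem permW_coe (s : SInf) :
    (permW (Γ := Γ) s : W Γ) = SemidirectProduct.inr (s : Equiv.Perm ℕ) := rfl

theorem seqW_coe (γ : GammaE Γ) :
    (seqW (Γ := Γ) γ : W Γ) = SemidirectProduct.inl (γ : ℕ → Γ) := rfl

theorem permW_inv (s : SInf) : (permW (Γ := Γ) s)⁻¹ = permW s⁻¹ := by
  apply Subtype.ext
  show ((permW (Γ := Γ) s : W Γ))⁻¹ = SemidirectProduct.inr ((s : Equiv.Perm ℕ)⁻¹)
  rw [permW_coe, ← map_inv]

/-- The permutation part of `g` as an element of `SInf`. -/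
def sOf (g : WG Γ) : SInf := ⟨(g : W Γ).right, g.2.1⟩

/-- The sequence part of `g` (twisted) as an element of `GammaE Γ`. -/
def gOf (g : WG Γ) : GammaE Γ :=
  ⟨fun i => (g : W Γ).left ((g : W Γ).right i), by
    rw [mem_GammaE]
    exact Set.Finite.preimage ((g : W Γ).right.injective.injOn) g.2.2⟩

theorem decompW (g : WG Γ) : g = permW (sOf g) * seqW (gOf g) := by
  apply Subtype.ext
  refine (WG_ext ?_ ?_).symm
  · show (1 : ℕ → Γ) * permAction Γ (g : W Γ).right (gOf g : ℕ → Γ) = (g : W Γ).left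
    rw [one_mul]
    funext i
    show (g : W Γ).left ((g : W Γ).right ((g : W Γ).right⁻¹ i)) = _
    exact congrArg _ (Equiv.apply_symm_apply _ _)
  · show (g : W Γ).right * 1 = (g : W Γ).right
    rw [mul_one]

theorem conj_right (s : SInf) (g : WG Γ) :
    ((permW s * g * (permW s)⁻¹ : WG Γ) : W Γ).right
      = (s : Equiv.Perm ℕ) * (g : W Γ).right * (s : Equiv.Perm ℕ)⁻¹ := rfl

theorem conj_left (s : SInf) (g : WG Γ) (i : ℕ) :
    ((permW s * g * (permW s)⁻¹ : WG Γ) : W Γ).left i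
      = (g : W Γ).left ((s : Equiv.Perm ℕ)⁻¹ i) := by
  show ((1 : ℕ → Γ) * permAction Γ (s : Equiv.Perm ℕ) (g : W Γ).left *
      permAction Γ ((s : Equiv.Perm ℕ) * (g : W Γ).right)
        (((permW (Γ := Γ) s)⁻¹ : WG Γ) : W Γ).left) i = _
  have h1 : (((permW (Γ := Γ) s)⁻¹ : WG Γ) : W Γ).left = (1 : ℕ → Γ) := by
    rw [permW_inv, permW_coe, SemidirectProduct.left_inr]
  rw [h1, map_one, mul_one, one_mul, permAction_apply]

theorem swapW_mul_self (n m : ℕ) : swapW (Γ := Γ) n m * swapW n m = 1 := by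
  apply Subtype.ext
  show SemidirectProduct.inr (Equiv.swap n m) * SemidirectProduct.inr (Equiv.swap n m)
      = (1 : W Γ)
  rw [← map_mul, Equiv.swap_mul_self, map_one]

theorem swapW_inv (n m : ℕ) : (swapW (Γ := Γ) n m)⁻¹ = swapW n m :=
  inv_eq_of_mul_eq_one_right (swapW_mul_self n m)

theorem eventually_comm (g : WG Γ) :
    ∀ᶠ n in atTop, g * swapW (Γ := Γ) n (n + 1) = swapW n (n + 1) * g := by
  obtain ⟨N, hN⟩ : ∃ N : ℕ, ∀ i, N ≤ i → (g : W Γ).right i = i ∧ (g : W Γ).left i = 1 := by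
    obtain ⟨B, hB⟩ := (g.2.1.union g.2.2).bddAbove
    refine ⟨B + 1, fun i hi => ?_⟩
    constructor
    · by_contra hc
      have := hB (Set.mem_union_left _ hc)
      omega
    · by_contra hc
      have := hB (Set.mem_union_right _ hc)
      omega
  filter_upwards [eventually_ge_atTop N] with n hn
  apply Subtype.ext
  have hr : ∀ i, N ≤ i → (g : W Γ).right i = i := fun i hi => (hN i hi).1
  have hl : ∀ i, N ≤ i → (g : W Γ).left i = 1 := fun i hi => (hN i hi).2
  refine WG_ext ?_ ?_
  · show (g : W Γ).left * permAction Γ (g : W Γ).right (1 : ℕ → Γ)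
      = (1 : ℕ → Γ) * permAction Γ (Equiv.swap n (n + 1)) (g : W Γ).left
    rw [map_one, mul_one, one_mul]
    funext i
    rw [permAction_apply, Equiv.swap_inv]
    rcases eq_or_ne i n with rfl | h1
    · rw [Equiv.swap_apply_left, hl _ (by omega), hl _ (by omega)]
    rcases eq_or_ne i (n + 1) with rfl | h2
    · rw [Equiv.swap_apply_right, hl _ (by omega), hl _ (by omega)]
    · rw [Equiv.swap_apply_of_ne_of_ne h1 h2]
  · show (g : W Γ).right * Equiv.swap n (n + 1) = Equiv.swap n (n + 1) * (g : W Γ).right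
    set r := (g : W Γ).right with hrdef
    ext i
    simp only [Equiv.Perm.mul_apply]
    rcases eq_or_ne i n with rfl | h1
    · rw [Equiv.swap_apply_left, hr _ (by omega), hr _ (by omega), Equiv.swap_apply_left]
    rcases eq_or_ne i (n + 1) with rfl | h2
    · rw [Equiv.swap_apply_right, hr _ (by omega), hr _ (by omega), Equiv.swap_apply_right]
    · rw [Equiv.swap_apply_of_ne_of_ne h1 h2]
      have hrn : r i ≠ n := by
        intro hc
        exact h1 (r.injective (by rw [hc, hr n (by omega)]))
      have hrn1 : r i ≠ n + 1 := by
        intro hc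
        exact h2 (r.injective (by rw [hc, hr (n + 1) (by omega)]))
      rw [Equiv.swap_apply_of_ne_of_ne hrn hrn1]

variable {H : Type*} [NormedAddCommGroup H] [InnerProductSpace ℂ H] [CompleteSpace H]

theorem tendsto_zero_of_dense {T : ℕ → H →L[ℂ] H} {C : ℝ} (hC : ∀ n, ‖T n‖ ≤ C)
    {s : Set H} (hs : Dense s)
    (h : ∀ y ∈ s, Tendsto (fun n => T n y) atTop (𝓝 (0 : H))) (x : H) :
    Tendsto (fun n => T n x) atTop (𝓝 (0 : H)) := by
  have hC0 : (0 : ℝ) ≤ C := le_trans (norm_nonneg _) (hC 0)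
  rw [NormedAddCommGroup.tendsto_nhds_zero]
  intro ε hε
  have hd : (0 : ℝ) < ε / (2 * (C + 1)) := by positivity
  obtain ⟨y, hy, hxy⟩ := Metric.mem_closure_iff.mp (hs x) _ hd
  have h2 := NormedAddCommGroup.tendsto_nhds_zero.mp (h y hy) (ε / 2) (by positivity)
  filter_upwards [h2] with n hn
  have e1 : T n x = T n (x - y) + T n y := by rw [map_sub]; abel
  have e2 : ‖T n (x - y)‖ ≤ C * ‖x - y‖ :=
    le_trans ((T n).le_opNorm _) (mul_le_mul_of_nonneg_right (hC n) (norm_nonneg _))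
  have e3 : ‖x - y‖ < ε / (2 * (C + 1)) := by rwa [← dist_eq_norm]
  have e4 : C * ‖x - y‖ ≤ C * (ε / (2 * (C + 1))) :=
    mul_le_mul_of_nonneg_left e3.le hC0
  have e5 : C * (ε / (2 * (C + 1))) ≤ ε / 2 := by
    have h6 : (0 : ℝ) < C + 1 := by linarith
    have h7 : (C + 1) * (ε / (2 * (C + 1))) = ε / 2 := by
      field_simp
    have h8 : C * (ε / (2 * (C + 1))) ≤ (C + 1) * (ε / (2 * (C + 1))) :=
      mul_le_mul_of_nonneg_right (by linarith) hd.le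
    linarith
  calc ‖T n x‖ ≤ ‖T n (x - y)‖ + ‖T n y‖ := by rw [e1]; exact norm_add_le _ _
    _ < ε / 2 + ε / 2 := by
        have := le_trans e2 (le_trans e4 e5)
        linarith
    _ = ε := by ring

section Rep

variable (φ : Γ → ℂ) (π : WG Γ →* (H →L[ℂ] H)) (ξ : H)

theorem inner_pi
    (hrep : ∀ (s : SInf) (γ : GammaE Γ),
      ⟪ξ, π (permW s * seqW γ) ξ⟫ =
        if (s : Equiv.Perm ℕ) = 1 then ∏ᶠ k, φ ((γ : ℕ → Γ) k) else 0) (g : WG Γ) :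
    ⟪ξ, π g ξ⟫ = if (g : W Γ).right = 1 then ∏ᶠ k, φ ((g : W Γ).left k) else 0 := by
  conv_lhs => rw [decompW g]
  rw [hrep]
  have hs : ((sOf g : SInf) : Equiv.Perm ℕ) = (g : W Γ).right := rfl
  rw [hs]
  split_ifs with h
  · refine finprod_congr fun k => ?_
    show φ ((g : W Γ).left ((g : W Γ).right k)) = _
    rw [h, Equiv.Perm.one_apply]
  · rfl

theorem inner_conj
    (hrep : ∀ (s : SInf) (γ : GammaE Γ),
      ⟪ξ, π (permW s * seqW γ) ξ⟫ =
        if (s : Equiv.Perm ℕ) = 1 then ∏ᶠ k, φ ((γ : ℕ → Γ) k) else 0)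
    (s : SInf) (g : WG Γ) :
    ⟪ξ, π (permW s * g * (permW s)⁻¹) ξ⟫ = ⟪ξ, π g ξ⟫ := by
  rw [inner_pi φ π ξ hrep, inner_pi φ π ξ hrep, conj_right]
  by_cases h : (g : W Γ).right = 1
  · rw [if_pos h, if_pos (conj_eq_one_iff.mpr h)]
    calc (∏ᶠ k, φ (((permW s * g * (permW s)⁻¹ : WG Γ) : W Γ).left k))
        = ∏ᶠ k, φ ((g : W Γ).left ((s : Equiv.Perm ℕ)⁻¹ k)) :=
          finprod_congr fun k => by rw [conj_left]
      _ = ∏ᶠ k, φ ((g : W Γ).left k) :=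
          finprod_comp_equiv (f := fun k => φ ((g : W Γ).left k))
            (((s : Equiv.Perm ℕ)⁻¹ : Equiv.Perm ℕ) : ℕ ≃ ℕ)
  · rw [if_neg h, if_neg (fun hc => h (conj_eq_one_iff.mp hc))]

theorem star_pi (hunit : ∀ g, π g ∈ unitary (H →L[ℂ] H)) (g : WG Γ) :
    star (π g) = π g⁻¹ := by
  have h1 := (Unitary.mem_iff.mp (hunit g)).1
  calc star (π g) = star (π g) * (π g * π g⁻¹) := by
        rw [← map_mul, mul_inv_cancel, map_one, mul_one]
    _ = star (π g) * π g * π g⁻¹ := by rw [mul_assoc]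
    _ = π g⁻¹ := by rw [h1, one_mul]

theorem inner_pi_pi (hunit : ∀ g, π g ∈ unitary (H →L[ℂ] H)) (g h : WG Γ) (x y : H) :
    ⟪π g x, π h y⟫ = ⟪x, π (g⁻¹ * h) y⟫ := by
  rw [← ContinuousLinearMap.adjoint_inner_right (π g), ← ContinuousLinearMap.star_eq_adjoint,
    star_pi π hunit, map_mul, ContinuousLinearMap.mul_apply]

theorem norm_pi (hunit : ∀ g, π g ∈ unitary (H →L[ℂ] H)) (g : WG Γ) (x : H) :
    ‖π g x‖ = ‖x‖ := by
  have h : ⟪π g x, π g x⟫ = ⟪x, x⟫ := by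
    rw [inner_pi_pi π hunit, inv_mul_cancel, map_one, ContinuousLinearMap.one_apply]
  rw [norm_eq_sqrt_re_inner (𝕜 := ℂ) (π g x), norm_eq_sqrt_re_inner (𝕜 := ℂ) x, h]

theorem norm_pi_le (hunit : ∀ g, π g ∈ unitary (H →L[ℂ] H)) (g : WG Γ) : ‖π g‖ ≤ 1 :=
  ContinuousLinearMap.opNorm_le_bound _ zero_le_one fun x => by
    rw [norm_pi π hunit, one_mul]

theorem mem_commutant_of_apply
    (hcyclic :
      Dense ((Submodule.span ℂ (Set.range fun g : WG Γ => π g ξ) : Submodule ℂ H) : Set H))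
    {t : WG Γ} {R : H →L[ℂ] H} (hR : ∀ g : WG Γ, R (π g ξ) = π (g * t) ξ) :
    R ∈ commutant (repSet π) := by
  intro A hA
  obtain ⟨h, rfl⟩ := hA
  have heq : Set.EqOn ⇑(R * π h) ⇑(π h * R)
      ((Submodule.span ℂ (Set.range fun g : WG Γ => π g ξ) : Submodule ℂ H) : Set H) := by
    intro x hx
    have hx' : x ∈ Submodule.span ℂ (Set.range fun g : WG Γ => π g ξ) := hx
    refine Submodule.span_induction
      (p := fun x _ => (R * π h) x = (π h * R) x) ?_ ?_ ?_ ?_ hx'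
    · rintro _ ⟨g, rfl⟩
      have l1 : π h (π g ξ) = π (h * g) ξ := by rw [map_mul]; rfl
      have l2 : π h (π (g * t) ξ) = π (h * (g * t)) ξ := by rw [map_mul π h (g * t)]; rfl
      show R (π h (π g ξ)) = π h (R (π g ξ))
      rw [hR g, l1, l2, hR (h * g), mul_assoc]
    · simp
    · intro a b _ _ h1 h2
      rw [map_add, map_add, h1, h2]
    · intro a z _ h1
      rw [map_smul, map_smul, h1]
  have hfe : ⇑(R * π h) = ⇑(π h * R) :=
    Continuous.ext_on hcyclic (R * π h).continuous (π h * R).continuous heq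
  exact ContinuousLinearMap.ext fun x => congrFun hfe x

theorem exists_R (hunit : ∀ g, π g ∈ unitary (H →L[ℂ] H))
    (hrep : ∀ (s : SInf) (γ : GammaE Γ),
      ⟪ξ, π (permW s * seqW γ) ξ⟫ =
        if (s : Equiv.Perm ℕ) = 1 then ∏ᶠ k, φ ((γ : ℕ → Γ) k) else 0)
    (hcyclic :
      Dense ((Submodule.span ℂ (Set.range fun g : WG Γ => π g ξ) : Submodule ℂ H) : Set H))
    (s₀ : SInf) :
    ∃ R : H →L[ℂ] H, ‖R‖ ≤ 1 ∧ ∀ g : WG Γ, R (π g ξ) = π (g * permW s₀) ξ := by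
  classical
  set t : WG Γ := permW s₀ with ht
  set v : WG Γ → H := fun g => π g ξ with hv
  set v' : WG Γ → H := fun g => π (g * t) ξ with hv'
  set Φ : ((WG Γ) →₀ ℂ) →ₗ[ℂ] H := Finsupp.linearCombination ℂ v with hΦ
  set Φ' : ((WG Γ) →₀ ℂ) →ₗ[ℂ] H := Finsupp.linearCombination ℂ v' with hΦ'
  have hterm : ∀ g h : WG Γ, ⟪v' g, v' h⟫ = ⟪v g, v h⟫ := by
    intro g h
    show ⟪π (g * t) ξ, π (h * t) ξ⟫ = ⟪π g ξ, π h ξ⟫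
    rw [inner_pi_pi π hunit, inner_pi_pi π hunit]
    have key : (g * t)⁻¹ * (h * t) = permW s₀⁻¹ * (g⁻¹ * h) * (permW s₀⁻¹)⁻¹ := by
      rw [← permW_inv, ht]
      group
    rw [key, inner_conj φ π ξ hrep]
  have hinner : ∀ f f' : (WG Γ) →₀ ℂ, ⟪Φ' f, Φ' f'⟫ = ⟪Φ f, Φ f'⟫ := by
    intro f f'
    rw [hΦ, hΦ']
    simp only [Finsupp.linearCombination_apply, Finsupp.sum]
    rw [sum_inner, sum_inner]
    refine Finset.sum_congr rfl fun g _ => ?_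
    rw [inner_sum, inner_sum]
    refine Finset.sum_congr rfl fun h _ => ?_
    rw [inner_smul_left, inner_smul_left, inner_smul_right, inner_smul_right, hterm]
  have hker : LinearMap.ker Φ ≤ LinearMap.ker Φ' := by
    intro f hf
    rw [LinearMap.mem_ker] at hf ⊢
    rw [← inner_self_eq_zero (𝕜 := ℂ), hinner, hf, inner_zero_right]
  set R0 : LinearMap.range Φ →ₗ[ℂ] H :=
    (Submodule.liftQ (LinearMap.ker Φ) Φ' hker).comp
      (LinearMap.quotKerEquivRange Φ).symm.toLinearMap with hR0
  have hR0_apply : ∀ (f : (WG Γ) →₀ ℂ) (hm : Φ f ∈ LinearMap.range Φ),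
      R0 ⟨Φ f, hm⟩ = Φ' f := by
    intro f hm
    rw [hR0]
    simp only [LinearMap.comp_apply, LinearEquiv.coe_toLinearMap,
      LinearMap.quotKerEquivRange_symm_apply_image]
    exact Submodule.liftQ_apply _ _ _
  have hnorm_eq : ∀ f : (WG Γ) →₀ ℂ, ‖Φ' f‖ = ‖Φ f‖ := fun f => by
    rw [norm_eq_sqrt_re_inner (𝕜 := ℂ) (Φ' f), norm_eq_sqrt_re_inner (𝕜 := ℂ) (Φ f), hinner]
  have hR0_norm : ∀ x : LinearMap.range Φ, ‖R0 x‖ ≤ 1 * ‖x‖ := by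
    rintro ⟨x, f, rfl⟩
    rw [hR0_apply f ⟨f, rfl⟩]
    show ‖Φ' f‖ ≤ 1 * ‖Φ f‖
    rw [one_mul, hnorm_eq]
  set Rc : (LinearMap.range Φ) →L[ℂ] H := R0.mkContinuous 1 hR0_norm with hRc
  set e : (LinearMap.range Φ) →L[ℂ] H := (LinearMap.range Φ).subtypeL with he
  have h_dense : DenseRange e := by
    have h1 : Set.range ⇑e = ((LinearMap.range Φ : Submodule ℂ H) : Set H) := by
      ext z
      constructor
      · rintro ⟨w, rfl⟩; exact w.2
      · intro hz; exact ⟨⟨z, hz⟩, rfl⟩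
    rw [DenseRange, h1]
    have h2 : LinearMap.range Φ = Submodule.span ℂ (Set.range v) := by
      rw [hΦ, Finsupp.range_linearCombination]
    rw [h2]
    exact hcyclic
  have h_iso : Isometry ⇑e := fun x y => rfl
  have h_ui : IsUniformInducing ⇑e := h_iso.isUniformInducing
  refine ⟨Rc.extend e, ?_, ?_⟩
  · have hbound : ∀ x : H, ‖(Rc.extend e) x‖ ≤ ‖x‖ := by
      have hcl : IsClosed {x : H | ‖(Rc.extend e) x‖ ≤ ‖x‖} :=
        isClosed_le ((Rc.extend e).continuous.norm) continuous_norm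
      intro x
      refine hcl.closure_subset_iff.mpr ?_ (h_dense x)
      rintro _ ⟨z, rfl⟩
      show ‖(Rc.extend e) (e z)‖ ≤ ‖e z‖
      rw [ContinuousLinearMap.extend_eq (h_dense := h_dense) (h_e := h_ui)]
      show ‖R0 z‖ ≤ ‖e z‖
      have := hR0_norm z
      rwa [one_mul] at this
    exact ContinuousLinearMap.opNorm_le_bound _ zero_le_one fun x => by
      rw [one_mul]; exact hbound x
  · intro g
    have hmem : π g ξ ∈ LinearMap.range Φ := by
      refine ⟨Finsupp.single g 1, ?_⟩
      rw [hΦ, Finsupp.linearCombination_single, one_smul]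
    have h1 : π g ξ = e ⟨π g ξ, hmem⟩ := rfl
    rw [h1, ContinuousLinearMap.extend_eq (h_dense := h_dense) (h_e := h_ui)]
    show R0 ⟨π g ξ, hmem⟩ = _
    have h2 : (⟨π g ξ, hmem⟩ : LinearMap.range Φ)
        = ⟨Φ (Finsupp.single g 1), LinearMap.mem_range_self Φ _⟩ := by
      apply Subtype.ext
      show π g ξ = Φ (Finsupp.single g 1)
      rw [hΦ, Finsupp.linearCombination_single, one_smul]
    rw [h2, hR0_apply]
    show Φ' (Finsupp.single g 1) = _
    rw [hΦ', Finsupp.linearCombination_single, one_smul]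

end Rep

end AuxDN


theorem statement_4 {Γ : Type*} [Group Γ] {H : Type*} [NormedAddCommGroup H]
    [InnerProductSpace ℂ H] [CompleteSpace H]
    (φ : Γ → ℂ) (hφone : φ 1 = 1)
    (π : WG Γ →* (H →L[ℂ] H)) (ξ : H)
    (hunit : ∀ g, π g ∈ unitary (H →L[ℂ] H))
    (hnorm : ‖ξ‖ = 1)
    (hcyclic :
      Dense ((Submodule.span ℂ (Set.range fun g : WG Γ => π g ξ) : Submodule ℂ H) : Set H))
    (hrep : ∀ (s : SInf) (γ : GammaE Γ),
      ⟪ξ, π (permW s * seqW γ) ξ⟫ =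
        if (s : Equiv.Perm ℕ) = 1 then ∏ᶠ k, φ ((γ : ℕ → Γ) k) else 0) :
    (∀ n : ℕ, IsSelfAdjoint (π (swapW n (n + 1)))) ∧
    (∀ m ∈ vN π, ∀ x : H,
      Tendsto (fun n => ‖(m * π (swapW n (n + 1)) - π (swapW n (n + 1)) * m) x‖)
        atTop (𝓝 0)) ∧
    ¬ ∃ c : ℕ → ℂ, ∀ x : H,
      Tendsto (fun n => ‖(π (swapW n (n + 1)) - c n • (1 : H →L[ℂ] H)) x‖) atTop (𝓝 0) := by
  refine ⟨?_, ?_, ?_⟩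
  · -- each π(s_n) is a self-adjoint unitary
    intro n
    have h1 : (swapW (Γ := Γ) n (n + 1))⁻¹ = swapW n (n + 1) := swapW_inv n (n + 1)
    show star (π (swapW n (n + 1))) = π (swapW n (n + 1))
    rw [star_pi π hunit, h1]
  · -- central sequence
    intro m hm x
    set t : ℕ → WG Γ := fun n => swapW (Γ := Γ) n (n + 1) with htdef
    have hex : ∀ n : ℕ, ∃ R : H →L[ℂ] H, ‖R‖ ≤ 1 ∧
        ∀ g : WG Γ, R (π g ξ) = π (g * t n) ξ := by
      intro n
      obtain ⟨R, h1, h2⟩ := exists_R φ π ξ hunit hrep hcyclic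
        ⟨Equiv.swap n (n + 1), swap_mem_SInf n (n + 1)⟩
      exact ⟨R, h1, fun g => h2 g⟩
    choose R hR1 hR2 using hex
    have hRcomm : ∀ n, R n ∈ commutant (repSet π) := fun n =>
      mem_commutant_of_apply π ξ hcyclic (hR2 n)
    have hRξ : ∀ n, R n ξ = π (t n) ξ := by
      intro n
      have := hR2 n 1
      rwa [map_one, ContinuousLinearMap.one_apply, one_mul] at this
    have hA : ∀ y : H, Tendsto (fun n => (R n - π (t n)) y) atTop (𝓝 (0 : H)) := by
      intro y
      refine tendsto_zero_of_dense (T := fun n => R n - π (t n)) (C := 2) ?_ hcyclic ?_ y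
      · intro n
        calc ‖R n - π (t n)‖ ≤ ‖R n‖ + ‖π (t n)‖ := norm_sub_le _ _
          _ ≤ 1 + 1 := add_le_add (hR1 n) (norm_pi_le π hunit _)
          _ = 2 := by norm_num
      · intro z hz
        have hz' : z ∈ Submodule.span ℂ (Set.range fun g : WG Γ => π g ξ) := hz
        have hev : ∀ᶠ n in atTop, (R n - π (t n)) z = 0 := by
          refine Submodule.span_induction
            (p := fun z _ => ∀ᶠ n in atTop, (R n - π (t n)) z = 0) ?_ ?_ ?_ ?_ hz'
          · rintro _ ⟨g, rfl⟩
            filter_upwards [eventually_comm (Γ := Γ) g] with n hn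
            have e1 : π (t n) (π g ξ) = π (t n * g) ξ := by
              rw [map_mul π (t n) g]; rfl
            rw [ContinuousLinearMap.sub_apply, hR2, sub_eq_zero, e1, ← hn]
          · exact Filter.Eventually.of_forall fun n => by simp
          · intro a b _ _ ha hb
            filter_upwards [ha, hb] with n h1 h2
            rw [map_add, h1, h2, add_zero]
          · intro a z _ hz1
            filter_upwards [hz1] with n h1
            rw [map_smul, h1, smul_zero]
        exact Filter.Tendsto.congr' (hev.mono fun n h => h.symm) tendsto_const_nhds
    rw [← tendsto_zero_iff_norm_tendsto_zero]
    refine tendsto_zero_of_dense (T := fun n => m * π (t n) - π (t n) * m)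
      (C := 2 * ‖m‖) ?_ hcyclic ?_ x
    · intro n
      calc ‖m * π (t n) - π (t n) * m‖ ≤ ‖m * π (t n)‖ + ‖π (t n) * m‖ := norm_sub_le _ _
        _ ≤ ‖m‖ * ‖π (t n)‖ + ‖π (t n)‖ * ‖m‖ := add_le_add (norm_mul_le _ _) (norm_mul_le _ _)
        _ ≤ ‖m‖ * 1 + 1 * ‖m‖ :=
            add_le_add (mul_le_mul_of_nonneg_left (norm_pi_le π hunit _) (norm_nonneg m))
              (mul_le_mul_of_nonneg_right (norm_pi_le π hunit _) (norm_nonneg m))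
        _ = 2 * ‖m‖ := by ring
    · intro z hz
      have hz' : z ∈ Submodule.span ℂ (Set.range fun g : WG Γ => π g ξ) := hz
      refine Submodule.span_induction
        (p := fun z _ => Tendsto (fun n => (m * π (t n) - π (t n) * m) z) atTop (𝓝 (0 : H)))
        ?_ ?_ ?_ ?_ hz'
      · rintro _ ⟨g, rfl⟩
        have hev : ∀ᶠ n in atTop,
            (m * π (t n) - π (t n) * m) (π g ξ) = (R n - π (t n)) (m (π g ξ)) := by
          filter_upwards [eventually_comm (Γ := Γ) g] with n hn
          have e1 : π (t n) (π g ξ) = R n (π g ξ) := by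
            have l1 : π (t n) (π g ξ) = π (t n * g) ξ := by rw [map_mul π (t n) g]; rfl
            have l2 : π (g * t n) ξ = π g (π (t n) ξ) := by rw [map_mul π g (t n)]; rfl
            have l3 : π g (R n ξ) = (π g * R n) ξ := rfl
            have l4 : (R n * π g) ξ = R n (π g ξ) := rfl
            rw [l1, ← hn, l2, ← hRξ n, l3, ← hRcomm n (π g) ⟨g, rfl⟩, l4]
          have e2 : m (R n (π g ξ)) = R n (m (π g ξ)) := by
            have l5 : m (R n (π g ξ)) = (m * R n) (π g ξ) := rfl
            have l6 : (R n * m) (π g ξ) = R n (m (π g ξ)) := rfl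
            rw [l5, hm (R n) (hRcomm n), l6]
          rw [ContinuousLinearMap.sub_apply, ContinuousLinearMap.sub_apply,
            ContinuousLinearMap.mul_apply, ContinuousLinearMap.mul_apply, e1, e2]
        exact Filter.Tendsto.congr' (hev.mono fun n h => h.symm) (hA (m (π g ξ)))
      · exact Filter.Tendsto.congr (fun n => (map_zero ((m * π (t n) - π (t n) * m))).symm)
          tendsto_const_nhds
      · intro a b _ _ ha hb
        have := ha.add hb
        rw [add_zero] at this
        exact this.congr fun n => (map_add _ a b).symm
      · intro a z _ hz1
        have := hz1.const_smul a
        rw [smul_zero] at this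
        exact this.congr fun n => (map_smul _ a z).symm
  · -- nontriviality
    rintro ⟨c, hc⟩
    have h0 : ∀ n : ℕ, ⟪ξ, π (swapW n (n + 1)) ξ⟫ = 0 := by
      intro n
      rw [inner_pi φ π ξ hrep]
      rw [if_neg]
      intro h
      have h2 : Equiv.swap n (n + 1) = (1 : Equiv.Perm ℕ) := h
      have h3 := Equiv.ext_iff.mp h2 n
      rw [Equiv.swap_apply_left, Equiv.Perm.one_apply] at h3
      omega
    have hinner2 : ∀ n : ℕ,
        ⟪ξ, (π (swapW n (n + 1)) - c n • (1 : H →L[ℂ] H)) ξ⟫ = -c n := by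
      intro n
      rw [ContinuousLinearMap.sub_apply, inner_sub_right, h0 n,
        ContinuousLinearMap.smul_apply, ContinuousLinearMap.one_apply, inner_smul_right,
        inner_self_eq_norm_sq_to_K, hnorm]
      push_cast
      ring
    have hcn : Tendsto (fun n => ‖c n‖) atTop (𝓝 (0 : ℝ)) := by
      have hb : ∀ n : ℕ, ‖c n‖ ≤ ‖(π (swapW n (n + 1)) - c n • (1 : H →L[ℂ] H)) ξ‖ := by
        intro n
        calc ‖c n‖ = ‖⟪ξ, (π (swapW n (n + 1)) - c n • (1 : H →L[ℂ] H)) ξ⟫‖ := by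
              rw [hinner2 n, norm_neg]
          _ ≤ ‖ξ‖ * ‖(π (swapW n (n + 1)) - c n • (1 : H →L[ℂ] H)) ξ‖ :=
              norm_inner_le_norm _ _
          _ = ‖(π (swapW n (n + 1)) - c n • (1 : H →L[ℂ] H)) ξ‖ := by rw [hnorm, one_mul]
      exact squeeze_zero (fun n => norm_nonneg _) hb (hc ξ)
    have hc0 : Tendsto c atTop (𝓝 (0 : ℂ)) := tendsto_zero_iff_norm_tendsto_zero.mpr hcn
    have t1 : Tendsto (fun n => (π (swapW n (n + 1)) - c n • (1 : H →L[ℂ] H)) ξ)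
        atTop (𝓝 (0 : H)) := tendsto_zero_iff_norm_tendsto_zero.mpr (hc ξ)
    have t2 : Tendsto (fun n => c n • ξ) atTop (𝓝 (0 : H)) := by
      have := hc0.smul_const ξ
      rwa [zero_smul] at this
    have h1 : Tendsto (fun n => π (swapW n (n + 1)) ξ) atTop (𝓝 (0 : H)) := by
      have heq : ∀ n : ℕ, (π (swapW n (n + 1)) - c n • (1 : H →L[ℂ] H)) ξ + c n • ξ
          = π (swapW n (n + 1)) ξ := by
        intro n
        rw [ContinuousLinearMap.sub_apply, ContinuousLinearMap.smul_apply,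
          ContinuousLinearMap.one_apply]
        abel
      have := t1.add t2
      rw [add_zero] at this
      exact this.congr heq
    have h2 : Tendsto (fun n => ‖π (swapW n (n + 1)) ξ‖) atTop (𝓝 (0 : ℝ)) :=
      tendsto_zero_iff_norm_tendsto_zero.mp h1
    have h3 : Tendsto (fun _ : ℕ => (1 : ℝ)) atTop (𝓝 (0 : ℝ)) :=
      h2.congr fun n => by rw [norm_pi π hunit, hnorm]
    have h4 : (1 : ℝ) = 0 := tendsto_nhds_unique tendsto_const_nhds h3
    norm_num at h4

end DN
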